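/- Strong Lagrangean duality holds for the minimal enclosing polyellipsoid problem: min_{x∈R^d} max_{a∈A} Σ_{u∈U} ω_u‖a−u−x‖ = max_{α∈Δ_A} min_{x∈R^d} Σ_{a∈A} α_a Σ_{u∈U} ω_u‖a−u−x‖, where Δ_A is the probability simplex over A. -/

import Mathlib

lemma mep_aux {E : Type*} [NormedAddCommGroup E] [NormedSpace ℝ E]
    {ι : Type*} [Fintype ι] [Nonempty ι]
    (F : E → ι → ℝ) (hF0 : ∀ x i, 0 ≤ F x i)
    (hFconv : ∀ (t s : ℝ) (x y : E) (i : ι), 0 ≤ t → 0 ≤ s → t + s = 1 →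
      F (t • x + s • y) i ≤ t * F x i + s * F y i) :
    ∃ c : ι → ℝ, (∀ i, 0 ≤ c i) ∧ (∑ i, c i = 1) ∧
      ∀ x, (⨅ y : E, sSup (Set.range (F y))) ≤ ∑ i, c i * F x i := by
  classical
  set P : ℝ := ⨅ y : E, sSup (Set.range (F y)) with hP
  have hbdd : ∀ y : E, BddAbove (Set.range (F y)) := fun y => (Set.finite_range _).bddAbove
  have hg0 : ∀ y : E, 0 ≤ sSup (Set.range (F y)) := fun y =>
    le_csSup_of_le (hbdd y) ⟨Classical.arbitrary ι, rfl⟩ (hF0 y _)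
  have hPle : ∀ y : E, P ≤ sSup (Set.range (F y)) := fun y =>
    ciInf_le ⟨0, by rintro r ⟨y, rfl⟩; exact hg0 y⟩ y
  set C : Set (ι → ℝ) := {z | ∃ x : E, ∀ i, F x i ≤ z i} with hC
  set Ω : Set (ι → ℝ) := {z | ∀ i, z i < P} with hΩ
  have hCconv : Convex ℝ C := by
    rintro z ⟨x, hx⟩ z' ⟨x', hx'⟩ t s ht hs hts
    refine ⟨t • x + s • x', fun i => (hFconv t s x x' i ht hs hts).trans ?_⟩
    have : (t • z + s • z') i = t * z i + s * z' i := by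
      simp [smul_eq_mul]
    rw [this]
    exact add_le_add (mul_le_mul_of_nonneg_left (hx i) ht)
      (mul_le_mul_of_nonneg_left (hx' i) hs)
  have hΩconv : Convex ℝ Ω := by
    have h : Ω = ⋂ i, (LinearMap.proj (R := ℝ) (φ := fun _ : ι => ℝ) i) ⁻¹' Set.Iio P := by
      ext z; simp [hΩ, Set.mem_iInter]
    rw [h]
    exact convex_iInter fun i => (convex_Iio P).linear_preimage _
  have hΩopen : IsOpen Ω := by
    have h : Ω = ⋂ i, (fun z : ι → ℝ => z i) ⁻¹' Set.Iio P := by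
      ext z; simp [hΩ, Set.mem_iInter]
    rw [h]
    exact isOpen_iInter_of_finite fun i => (isOpen_Iio).preimage (continuous_apply i)
  have hdisj : Disjoint Ω C := by
    rw [Set.disjoint_left]
    rintro z hz ⟨x, hx⟩
    have hmem : sSup (Set.range (F x)) ∈ Set.range (F x) :=
      (Set.range_nonempty _).csSup_mem (Set.finite_range _)
    obtain ⟨i, hi⟩ := hmem
    have h1 := hPle x
    rw [← hi] at h1
    exact absurd ((h1.trans (hx i)).trans_lt (hz i)) (lt_irrefl P)
  obtain ⟨φ, u, hφΩ, hφC⟩ := geometric_hahn_banach_open hΩconv hΩopen hCconv hdisj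
  have hz₀ : (fun i => F 0 i) ∈ C := ⟨0, fun i => le_rfl⟩
  set c' : ι → ℝ := fun i => φ (Pi.single i 1) with hc'
  have hc'0 : ∀ i, 0 ≤ c' i := by
    intro i
    by_contra h
    push_neg at h
    set t : ℝ := (u - φ (fun i => F 0 i) - 1) / c' i with htdef
    have hu0 : u ≤ φ (fun i => F 0 i) := hφC _ hz₀
    have ht0 : 0 ≤ t := by
      apply le_of_lt
      apply div_pos_of_neg_of_neg _ h
      linarith
    have hmem : (fun j => F 0 j) + t • (Pi.single i 1 : ι → ℝ) ∈ C := by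
      refine ⟨0, fun j => ?_⟩
      have : (0:ℝ) ≤ (t • (Pi.single i 1 : ι → ℝ)) j := by
        rcases eq_or_ne j i with rfl | hji
        · simp [ht0]
        · simp [Pi.single_apply, hji]
      calc F 0 j ≤ F 0 j + (t • (Pi.single i 1 : ι → ℝ)) j := le_add_of_nonneg_right this
        _ = ((fun j => F 0 j) + t • (Pi.single i 1 : ι → ℝ)) j := rfl
    have := hφC _ hmem
    rw [map_add, map_smul, smul_eq_mul] at this
    have hci : φ (Pi.single i 1) = c' i := rfl
    rw [hci] at this
    have ht : t * c' i = u - φ (fun i => F 0 i) - 1 := by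
      rw [htdef, div_mul_cancel₀]
      exact ne_of_lt h
    rw [ht] at this
    linarith
  have hrep : ∀ z : ι → ℝ, φ z = ∑ i, z i * c' i := by
    intro z
    have hzeq : z = ∑ i, z i • (Pi.single i 1 : ι → ℝ) := by
      funext j
      simp [Finset.sum_apply, Pi.single_apply, Finset.sum_ite_eq']
    conv_lhs => rw [hzeq]
    rw [map_sum]
    simp [smul_eq_mul, hc']
  have hSpos : 0 < ∑ i, c' i := by
    rcases lt_or_eq_of_le (Finset.sum_nonneg fun i _ => hc'0 i) with h | h
    · exact h
    · exfalso
      have hall : ∀ i ∈ Finset.univ, c' i = 0 :=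
        (Finset.sum_eq_zero_iff_of_nonneg fun i _ => hc'0 i).mp h.symm
      have hφ0 : ∀ z : ι → ℝ, φ z = 0 := by
        intro z; rw [hrep]; simp [hall _ (Finset.mem_univ _)]
      have h1 : φ (fun _ => P - 1) < u := hφΩ _ (fun i => by simp)
      have h2 : u ≤ φ (fun i => F 0 i) := hφC _ hz₀
      rw [hφ0] at h1; rw [hφ0] at h2
      linarith
  set S : ℝ := ∑ i, c' i with hS
  have hkey : ∀ x : E, P * S ≤ ∑ i, F x i * c' i := by
    intro x
    have h1 : u ≤ ∑ i, F x i * c' i := by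
      have := hφC (fun i => F x i) ⟨x, fun i => le_rfl⟩
      rwa [hrep] at this
    have h2 : ∀ ε : ℝ, 0 < ε → (P - ε) * S < u := by
      intro ε hε
      have hm : (fun _ : ι => P - ε) ∈ Ω := fun i => by simp [hΩ]; linarith
      have := hφΩ _ hm
      rw [hrep] at this
      calc (P - ε) * S = ∑ i, (P - ε) * c' i := by rw [Finset.mul_sum]
        _ < u := this
    have h3 : P * S ≤ u := by
      by_contra h
      push_neg at h
      have hε : 0 < (P * S - u) / S := div_pos (by linarith) hSpos
      have h4 := h2 _ hε
      have h5 : (P - (P * S - u) / S) * S = u := by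
        field_simp
        ring
      linarith
    linarith
  refine ⟨fun i => c' i / S, fun i => div_nonneg (hc'0 i) hSpos.le, ?_, ?_⟩
  · rw [← Finset.sum_div, ← hS, div_self hSpos.ne']
  · intro x
    have := hkey x
    have heq : ∑ i, c' i / S * F x i = (∑ i, F x i * c' i) / S := by
      rw [Finset.sum_div]
      exact Finset.sum_congr rfl fun i _ => by ring
    rw [heq, le_div_iff₀ hSpos]
    linarith

/-- Strong Lagrangean duality for the minimal enclosing polyellipsoid problem:
the primal optimal value equals the maximum, over the probability simplex, of
the dual (Weber) values, and the maximum is attained. -/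
theorem mep_strong_duality
    {E : Type*} [NormedAddCommGroup E] [NormedSpace ℝ E] [FiniteDimensional ℝ E]
    (U A : Finset E) (hA : A.Nonempty)
    (ω : E → ℝ) (hω : ∀ u ∈ U, 0 ≤ ω u) (hsum : ∑ u ∈ U, ω u = 1) :
    ∃ α : E → ℝ, (∀ a ∈ A, 0 ≤ α a) ∧ (∑ a ∈ A, α a = 1) ∧
      (⨅ x : E, ∑ a ∈ A, α a * ∑ u ∈ U, ω u * ‖a - u - x‖) =
        (⨅ x : E, sSup ((fun a => ∑ u ∈ U, ω u * ‖a - u - x‖) '' (A : Set E))) ∧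
      (∀ β : E → ℝ, (∀ a ∈ A, 0 ≤ β a) → (∑ a ∈ A, β a = 1) →
        (⨅ x : E, ∑ a ∈ A, β a * ∑ u ∈ U, ω u * ‖a - u - x‖) ≤
          ⨅ x : E, sSup ((fun a => ∑ u ∈ U, ω u * ‖a - u - x‖) '' (A : Set E))) := by
  classical
  have hι : Nonempty ↥A := Finset.nonempty_coe_sort.mpr hA
  set F : E → E → ℝ := fun x a => ∑ u ∈ U, ω u * ‖a - u - x‖ with hFdef
  have hF0 : ∀ (x a : E), 0 ≤ F x a := fun x a =>
    Finset.sum_nonneg fun u hu => mul_nonneg (hω u hu) (norm_nonneg _)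
  have hFconv : ∀ (t s : ℝ) (x y a : E), 0 ≤ t → 0 ≤ s → t + s = 1 →
      F (t • x + s • y) a ≤ t * F x a + s * F y a := by
    intro t s x y a ht hs hts
    have key : ∀ u : E, ‖a - u - (t • x + s • y)‖ ≤ t * ‖a - u - x‖ + s * ‖a - u - y‖ := by
      intro u
      have hid : a - u - (t • x + s • y) = t • (a - u - x) + s • (a - u - y) := by
        have hs' : s = 1 - t := by linarith
        subst hs'
        module
      rw [hid]
      calc ‖t • (a - u - x) + s • (a - u - y)‖
          ≤ ‖t • (a - u - x)‖ + ‖s • (a - u - y)‖ := norm_add_le _ _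
        _ = t * ‖a - u - x‖ + s * ‖a - u - y‖ := by
            rw [norm_smul, norm_smul, Real.norm_of_nonneg ht, Real.norm_of_nonneg hs]
    calc F (t • x + s • y) a
        ≤ ∑ u ∈ U, ω u * (t * ‖a - u - x‖ + s * ‖a - u - y‖) :=
          Finset.sum_le_sum fun u hu => mul_le_mul_of_nonneg_left (key u) (hω u hu)
      _ = t * F x a + s * F y a := by
          simp only [hFdef, Finset.mul_sum, ← Finset.sum_add_distrib]
          exact Finset.sum_congr rfl fun u _ => by ring
  -- bridge: image over A = range over subtype
  have himg : ∀ x : E, (fun a => F x a) '' (A : Set E)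
      = Set.range (fun i : ↥A => F x (i : E)) := fun x => Set.image_eq_range _ _
  obtain ⟨c, hc0, hc1, hckey⟩ := mep_aux (ι := ↥A) (fun x i => F x (i : E))
    (fun x i => hF0 x i) (fun t s x y i ht hs hts => hFconv t s x y i ht hs hts)
  set α : E → ℝ := fun a => if h : a ∈ A then c ⟨a, h⟩ else 0 with hα
  have hαsum : ∀ (γ : E → ℝ) (x : E), ∑ a ∈ A, α a * γ a = ∑ i : ↥A, c i * γ i := by
    intro γ x
    rw [← Finset.sum_attach A (fun a => α a * γ a), Finset.univ_eq_attach]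
    exact Finset.sum_congr rfl fun i _ => by rw [hα]; simp [i.2]
  -- weak duality
  have weak : ∀ β : E → ℝ, (∀ a ∈ A, 0 ≤ β a) → (∑ a ∈ A, β a = 1) →
      (⨅ x : E, ∑ a ∈ A, β a * F x a) ≤ ⨅ x : E, sSup ((fun a => F x a) '' (A : Set E)) := by
    intro β hβ0 hβ1
    apply ciInf_mono
    · exact ⟨0, by
        rintro r ⟨x, rfl⟩
        exact Finset.sum_nonneg fun a ha => mul_nonneg (hβ0 a ha) (hF0 x a)⟩
    · intro x
      have hbdd : BddAbove ((fun a => F x a) '' (A : Set E)) :=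
        ((A : Set E).toFinite.image _).bddAbove
      calc ∑ a ∈ A, β a * F x a
          ≤ ∑ a ∈ A, β a * sSup ((fun a => F x a) '' (A : Set E)) :=
            Finset.sum_le_sum fun a ha =>
              mul_le_mul_of_nonneg_left (le_csSup hbdd ⟨a, ha, rfl⟩) (hβ0 a ha)
        _ = sSup ((fun a => F x a) '' (A : Set E)) := by rw [← Finset.sum_mul, hβ1, one_mul]
  have hα0 : ∀ a ∈ A, 0 ≤ α a := fun a ha => by rw [hα]; simp [ha]; exact hc0 _
  have hα1 : ∑ a ∈ A, α a = 1 := by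
    rw [← Finset.sum_attach A (fun a => α a), Finset.univ_eq_attach] at *
    rw [← hc1]
    exact Finset.sum_congr rfl fun i _ => by rw [hα]; simp [i.2]
  refine ⟨α, hα0, hα1, ?_, weak⟩
  apply le_antisymm
  · exact weak α hα0 hα1
  · apply le_ciInf
    intro x
    have h1 := hckey x
    rw [hαsum (fun a => F x a) x]
    refine le_trans (le_of_eq ?_) h1
    exact iInf_congr fun y => by rw [himg y]
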